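/- Let A be a Noetherian commutative ring with a Poisson bracket, and let I ⊆ A be a Poisson ideal. Then every minimal prime over I is a Poisson ideal. In particular (the case I = 0): every minimal prime of a Noetherian Poisson algebra is a Poisson ideal, so every irreducible component of a Noetherian Poisson scheme is a Poisson subscheme. -/

import Mathlib

/-- If `P` is a minimal prime over `I`, then for every `p ∈ P` there are `n` and
`x ∉ P` with `x * p ^ n ∈ I`. -/
lemma exists_pow_mul_mem_of_mem_minimalPrimes
    {A : Type*} [CommRing A] (I P : Ideal A) (hP : P ∈ I.minimalPrimes)
    {p : A} (hp : p ∈ P) : ∃ n : ℕ, ∃ x : A, x ∉ P ∧ x * p ^ n ∈ I := by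
  rw [Ideal.minimalPrimes_eq_comap] at hP
  obtain ⟨Q, hQ, rfl⟩ := hP
  haveI hQp : Q.IsPrime := hQ.1.1
  set f := Ideal.Quotient.mk I
  -- `f p ∈ Q`, a minimal prime of `A ⧸ I`, so `f p` is "nilpotent locally".
  have hfp : f p ∈ Q := hp
  have hnil : IsNilpotent ((algebraMap (A ⧸ I) (Localization Q.primeCompl)) (f p)) := by
    haveI : Subsingleton (PrimeSpectrum (Localization Q.primeCompl)) :=
      IsLocalization.subsingleton_primeSpectrum_of_mem_minimalPrimes Q hQ _
    haveI : Ring.KrullDimLE 0 (Localization Q.primeCompl) :=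
      show Order.KrullDimLE 0 _ from inferInstance
    rw [Ring.KrullDimLE.isNilpotent_iff_mem_maximalIdeal]
    exact (IsLocalization.AtPrime.to_map_mem_maximal_iff
      (Localization Q.primeCompl) Q (f p)).mpr hfp
  obtain ⟨n, hn⟩ := hnil
  rw [← map_pow] at hn
  obtain ⟨m, hm⟩ := (IsLocalization.map_eq_zero_iff Q.primeCompl
    (Localization Q.primeCompl) ((f p) ^ n)).mp hn
  obtain ⟨x, hx⟩ := Ideal.Quotient.mk_surjective (m : A ⧸ I)
  refine ⟨n, x, ?_, ?_⟩
  · intro hxP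
    have : (m : A ⧸ I) ∈ Q := by rw [← hx]; exact hxP
    exact m.2 this
  · have : f (x * p ^ n) = 0 := by
      rw [map_mul, map_pow, hx, hm]
    exact (Ideal.Quotient.eq_zero_iff_mem).mp this

/-- In a Noetherian Poisson algebra over ℚ, every minimal prime over a Poisson ideal
`I` is a Poisson ideal.  In particular (taking `I = 0`), every minimal prime is a
Poisson ideal, so every irreducible component of a Noetherian Poisson scheme is a
Poisson subscheme. -/
theorem minimal_primes_are_poisson
    {A : Type*} [CommRing A] [Algebra ℚ A] [IsNoetherianRing A]
    (br : A →ₗ[ℚ] A →ₗ[ℚ] A)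
    (skew : ∀ a b : A, br a b = - br b a)
    (leibniz : ∀ a b c : A, br a (b * c) = br a b * c + br a c * b)
    (jacobi : ∀ a b c : A, br a (br b c) + br b (br c a) + br c (br a b) = 0)
    (I : Ideal A)
    (hI : ∀ i ∈ I, ∀ a : A, br i a ∈ I) :
    ∀ P ∈ I.minimalPrimes, ∀ p ∈ P, ∀ a : A, br p a ∈ P := by
  intro P hP p hp a
  classical
  haveI hPp : P.IsPrime := hP.1.1
  have hIP : I ≤ P := hP.1.2
  -- the derivation `D x = br x a`
  set D : A → A := fun x => br x a with hD
  have Dadd : ∀ x y, D (x + y) = D x + D y := by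
    intro x y; simp [hD]
  have Dleib : ∀ x y, D (x * y) = D x * y + D y * x := by
    intro x y
    have := leibniz a x y
    have h1 : D (x * y) = - br a (x * y) := by rw [hD]; simp [skew (x*y) a]
    rw [h1, this, hD]
    simp only [skew a x, skew a y]
    ring
  have DI : ∀ i ∈ I, D i ∈ I := fun i hi => hI i hi a
  -- power rule
  have Dpow : ∀ n : ℕ, D (p ^ (n + 1)) = (n + 1 : A) * p ^ n * D p := by
    intro n
    induction n with
    | zero => simp
    | succ k ih =>
      have : p ^ (k + 2) = p ^ (k + 1) * p := by ring
      rw [this, Dleib, ih]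
      push_cast
      ring
  -- the minimal `n` with `∃ x ∉ P, x * p ^ n ∈ I`
  have hex := exists_pow_mul_mem_of_mem_minimalPrimes I P hP hp
  set Q : ℕ → Prop := fun n => ∃ x : A, x ∉ P ∧ x * p ^ n ∈ I with hQdef
  have hexQ : ∃ n, Q n := hex
  obtain ⟨x, hxP, hxI⟩ := Nat.find_spec hexQ
  set n := Nat.find hexQ with hn
  have hn0 : n ≠ 0 := by
    intro h
    rw [h] at hxI
    simp only [pow_zero, mul_one] at hxI
    exact hxP (hIP hxI)
  obtain ⟨k, hk⟩ := Nat.exists_eq_succ_of_ne_zero hn0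
  rw [hk] at hxI
  -- apply D to `x * p ^ (k+1) ∈ I`
  have h1 : D (x * p ^ (k + 1)) ∈ I := DI _ hxI
  rw [Dleib, Dpow k] at h1
  -- multiply by `x`
  have h2 : x * (D x * p ^ (k + 1) + (k + 1 : A) * p ^ k * D p * x) ∈ I :=
    Ideal.mul_mem_left _ _ h1
  have h3 : D x * (x * p ^ (k + 1)) ∈ I := Ideal.mul_mem_left _ _ hxI
  have h4 : (k + 1 : A) * (x * x * p ^ k * D p) ∈ I := by
    have : (k + 1 : A) * (x * x * p ^ k * D p)
        = x * (D x * p ^ (k + 1) + (k + 1 : A) * p ^ k * D p * x)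
          - D x * (x * p ^ (k + 1)) := by ring
    rw [this]
    exact Ideal.sub_mem _ h2 h3
  -- divide by `k + 1` using the `ℚ`-algebra structure
  have h5 : x * x * p ^ k * D p ∈ I := by
    have hcast : ((k : ℚ) + 1 : ℚ) ≠ 0 := by positivity
    have : x * x * p ^ k * D p
        = algebraMap ℚ A (((k : ℚ) + 1)⁻¹) * ((k + 1 : A) * (x * x * p ^ k * D p)) := by
      rw [← mul_assoc]
      have : algebraMap ℚ A (((k : ℚ) + 1)⁻¹) * (k + 1 : A) = 1 := by
        have hmap : ((k : A) + 1) = algebraMap ℚ A ((k : ℚ) + 1) := by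
          push_cast; simp
        rw [hmap, ← map_mul, inv_mul_cancel₀ hcast, map_one]
      rw [this, one_mul]
    rw [this]
    exact Ideal.mul_mem_left _ _ h4
  -- conclude: if `D p ∉ P`, then `(x * x * D p) * p ^ k ∈ I` contradicts minimality
  by_contra hDp
  have hxxDp : x * x * D p ∉ P := fun h => by
    rcases hPp.mem_or_mem h with h' | h'
    · rcases hPp.mem_or_mem h' with h'' | h'' <;> exact hxP h''
    · exact hDp h'
  have hQk : Q k := ⟨x * x * D p, hxxDp, by
    have : x * x * D p * p ^ k = x * x * p ^ k * D p := by ring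
    rw [this]; exact h5⟩
  have := Nat.find_min' hexQ hQk
  omega
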